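/- Suppose ω : (0,1] → [0,∞) is nondecreasing and satisfies ∫₀¹ ω(r) |log r|^a / r dr < ∞ for some a ≥ 1. Then for every fixed c > 0 and every t ∈ (0, 1), one has t^c ∫_t^{1} ω(r) r^{−1−c} dr + ∫₀^t ω(r)/r dr ≤ |log t|^{−a} ∫₀^{1} ω(r) |log t|^{a} / r dr, provided t is small; in particular t^c ∫_t^1 ω(r) r^{−1−c} dr → 0 as t → 0⁺. -/

import Mathlib

open MeasureTheory Filter

theorem stmt16 (ω : ℝ → ℝ) (hω0 : ∀ r ∈ Set.Ioc (0:ℝ) 1, 0 ≤ ω r)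
    (hmono : MonotoneOn ω (Set.Ioc (0:ℝ) 1))
    (a : ℝ) (ha : 1 ≤ a)
    (hDini : IntegrableOn (fun r => ω r * |Real.log r| ^ a / r) (Set.Ioc (0:ℝ) 1))
    (c : ℝ) (hc : 0 < c) :
    (∃ t₀ ∈ Set.Ioo (0:ℝ) 1, ∀ t ∈ Set.Ioo (0:ℝ) t₀,
      t ^ c * (∫ r in Set.Ioc t 1, ω r * r ^ (-1 - c)) +
        (∫ r in Set.Ioc (0:ℝ) t, ω r / r) ≤
      |Real.log t| ^ (-a) * ∫ r in Set.Ioc (0:ℝ) 1, ω r * |Real.log t| ^ a / r) ∧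
    Tendsto (fun t => t ^ c * ∫ r in Set.Ioc t 1, ω r * r ^ (-1 - c))
      (nhdsWithin 0 (Set.Ioi 0)) (nhds 0) := by
  have hm : AEMeasurable ω (volume.restrict (Set.Ioc (0:ℝ) 1)) :=
    aemeasurable_restrict_of_monotoneOn measurableSet_Ioc hmono
  have hω1 : 0 ≤ ω 1 := hω0 1 ⟨one_pos, le_rfl⟩
  -- f := ω / id is integrable on (0,1]
  have hfm : AEStronglyMeasurable (fun r => ω r / r)
      (volume.restrict (Set.Ioc (0:ℝ) 1)) :=
    (hm.div aemeasurable_id).aestronglyMeasurable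
  have hfint : IntegrableOn (fun r => ω r / r) (Set.Ioc (0:ℝ) 1) := by
    apply Integrable.mono'
      (g := fun r => ω r * |Real.log r| ^ a / r + Real.exp 1 * ω 1)
    · exact hDini.add (integrableOn_const (by simp))
    · exact hfm
    · filter_upwards [ae_restrict_mem measurableSet_Ioc] with r hr
      have hr0 : 0 < r := hr.1
      have hωr : 0 ≤ ω r := hω0 r hr
      rw [Real.norm_eq_abs, abs_of_nonneg (div_nonneg hωr hr0.le)]
      rcases le_or_gt r (Real.exp (-1)) with h | h
      · have hlog : 1 ≤ |Real.log r| := by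
          rw [abs_of_nonpos (Real.log_nonpos hr0.le hr.2)]
          have h2 := Real.log_le_log hr0 h
          rw [Real.log_exp] at h2
          linarith
        have h1 : 1 ≤ |Real.log r| ^ a := Real.one_le_rpow hlog (by linarith)
        have h3 : ω r / r ≤ ω r * |Real.log r| ^ a / r := by
          gcongr
          exact le_mul_of_one_le_right hωr h1
        nlinarith [Real.exp_pos 1]
      · have h4 : ω r ≤ ω 1 := hmono hr ⟨one_pos, le_rfl⟩ hr.2
        have h5 : r⁻¹ ≤ Real.exp 1 := by
          have h5' : r⁻¹ ≤ (Real.exp (-1))⁻¹ := inv_anti₀ (Real.exp_pos _) h.le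
          rwa [Real.exp_neg, inv_inv] at h5'
        have h6 : ω r / r ≤ ω 1 * Real.exp 1 := by
          rw [div_eq_mul_inv]
          exact mul_le_mul h4 h5 (inv_nonneg.2 hr0.le) hω1
        have h7 : 0 ≤ ω r * |Real.log r| ^ a / r :=
          div_nonneg (mul_nonneg hωr (Real.rpow_nonneg (abs_nonneg _) _)) hr0.le
        nlinarith
  -- pointwise bound:  t^c * (ω r * r^(-1-c)) ≤ ω r / r  for 0 < t ≤ r ≤ 1
  have key : ∀ t : ℝ, 0 < t → ∀ r ∈ Set.Ioc t 1,
      t ^ c * (ω r * r ^ (-1 - c)) ≤ ω r / r := by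
    intro t ht r hr
    have hr0 : 0 < t := ht
    have hr1 : 0 < r := ht.trans hr.1
    have hωr : 0 ≤ ω r := hω0 r ⟨hr1, hr.2⟩
    have hsplit : r ^ (-1 - c) = r ^ (-c) / r := by
      rw [show (-1 - c) = -c + (-1) by ring, Real.rpow_add hr1, Real.rpow_neg_one,
        div_eq_mul_inv]
    have hfac : t ^ c * r ^ (-c) ≤ 1 := by
      rw [Real.rpow_neg hr1.le, ← div_eq_mul_inv, div_le_one (Real.rpow_pos_of_pos hr1 c)]
      exact Real.rpow_le_rpow ht.le hr.1.le hc.le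
    have h0 : 0 ≤ ω r / r := div_nonneg hωr hr1.le
    calc t ^ c * (ω r * r ^ (-1 - c)) = (t ^ c * r ^ (-c)) * (ω r / r) := by
          rw [hsplit]; ring
      _ ≤ 1 * (ω r / r) := mul_le_mul_of_nonneg_right hfac h0
      _ = ω r / r := one_mul _
  -- integrability of the truncated integrand
  have hint_t : ∀ t : ℝ, 0 < t → t < 1 →
      IntegrableOn (fun r => t ^ c * (ω r * r ^ (-1 - c))) (Set.Ioc t 1) := by
    intro t ht ht1
    have hsub : Set.Ioc t 1 ⊆ Set.Ioc (0:ℝ) 1 := Set.Ioc_subset_Ioc_left ht.le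
    have hm' : AEMeasurable ω (volume.restrict (Set.Ioc t 1)) :=
      hm.mono_measure (Measure.restrict_mono hsub le_rfl)
    apply Integrable.mono' (g := fun r => ω r / r)
    · exact hfint.mono_set hsub
    · exact (aemeasurable_const.mul
        (hm'.mul (measurable_id.pow_const (-1 - c)).aemeasurable)).aestronglyMeasurable
    · filter_upwards [ae_restrict_mem measurableSet_Ioc] with r hr
      have hr1 : 0 < r := ht.trans hr.1
      have hωr : 0 ≤ ω r := hω0 r ⟨hr1, hr.2⟩
      rw [Real.norm_eq_abs, abs_of_nonneg (mul_nonneg (Real.rpow_nonneg ht.le c)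
        (mul_nonneg hωr (Real.rpow_nonneg hr1.le _)))]
      exact key t ht r hr
  -- main estimate for t ∈ (0,1)
  have main : ∀ t : ℝ, 0 < t → t < 1 →
      t ^ c * (∫ r in Set.Ioc t 1, ω r * r ^ (-1 - c)) ≤
        ∫ r in Set.Ioc t 1, ω r / r := by
    intro t ht ht1
    rw [← integral_const_mul _ _]
    apply setIntegral_mono_on (hint_t t ht ht1)
      (hfint.mono_set (Set.Ioc_subset_Ioc_left ht.le)) measurableSet_Ioc
    intro r hr
    exact key t ht r hr
  constructor
  · refine ⟨1/2, by norm_num, fun t ht => ?_⟩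
    have ht0 : 0 < t := ht.1
    have ht1 : t < 1 := by linarith [ht.2]
    have hlogt : 0 < |Real.log t| := abs_pos.2 (Real.log_neg ht0 ht1).ne
    -- simplify RHS
    have hRHS : |Real.log t| ^ (-a) * ∫ r in Set.Ioc (0:ℝ) 1,
        ω r * |Real.log t| ^ a / r = ∫ r in Set.Ioc (0:ℝ) 1, ω r / r := by
      have h1 : (fun r => ω r * |Real.log t| ^ a / r)
          = fun r => |Real.log t| ^ a * (ω r / r) := by funext r; ring
      rw [h1, integral_const_mul _ _, Real.rpow_neg hlogt.le,
        inv_mul_cancel_left₀ (Real.rpow_pos_of_pos hlogt a).ne']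
    rw [hRHS]
    have hsplit : (∫ r in Set.Ioc (0:ℝ) 1, ω r / r)
        = (∫ r in Set.Ioc (0:ℝ) t, ω r / r) + ∫ r in Set.Ioc t 1, ω r / r := by
      rw [← setIntegral_union (Set.Ioc_disjoint_Ioc_of_le le_rfl) measurableSet_Ioc
        (hfint.mono_set (Set.Ioc_subset_Ioc_right ht1.le))
        (hfint.mono_set (Set.Ioc_subset_Ioc_left ht0.le)),
        Set.Ioc_union_Ioc_eq_Ioc ht0.le ht1.le]
    rw [hsplit]
    linarith [main t ht0 ht1]
  · -- dominated convergence
    set F : ℝ → ℝ → ℝ :=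
      fun t => (Set.Ioc t 1).indicator (fun r => t ^ c * (ω r * r ^ (-1 - c))) with hF
    have hev : ∀ᶠ t in nhdsWithin (0:ℝ) (Set.Ioi 0), t ∈ Set.Ioo (0:ℝ) 1 := by
      filter_upwards [self_mem_nhdsWithin,
        eventually_nhdsWithin_of_eventually_nhds (eventually_lt_nhds one_pos)] with t h1 h2
      exact ⟨h1, h2⟩
    have hmeas : ∀ᶠ t in nhdsWithin (0:ℝ) (Set.Ioi 0),
        AEStronglyMeasurable (F t) (volume.restrict (Set.Ioc (0:ℝ) 1)) := by
      filter_upwards [hev] with t ht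
      exact ((aemeasurable_const.mul
        (hm.mul (measurable_id.pow_const (-1 - c)).aemeasurable)).aestronglyMeasurable).indicator
        measurableSet_Ioc
    have hbound : ∀ᶠ t in nhdsWithin (0:ℝ) (Set.Ioi 0),
        ∀ᵐ r ∂(volume.restrict (Set.Ioc (0:ℝ) 1)), ‖F t r‖ ≤ ω r / r := by
      filter_upwards [hev] with t ht
      filter_upwards [ae_restrict_mem measurableSet_Ioc] with r hr
      have hr0 : 0 < r := hr.1
      have hωr : 0 ≤ ω r := hω0 r hr
      by_cases hrt : r ∈ Set.Ioc t 1
      · rw [hF]; simp only [Set.indicator_of_mem hrt]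
        rw [Real.norm_eq_abs, abs_of_nonneg (mul_nonneg (Real.rpow_nonneg ht.1.le c)
          (mul_nonneg hωr (Real.rpow_nonneg hr0.le _)))]
        exact key t ht.1 r hrt
      · rw [hF]; simp only [Set.indicator_of_notMem hrt, norm_zero]
        exact div_nonneg hωr hr0.le
    have hlim : ∀ᵐ r ∂(volume.restrict (Set.Ioc (0:ℝ) 1)),
        Tendsto (fun t => F t r) (nhdsWithin 0 (Set.Ioi 0)) (nhds 0) := by
      filter_upwards [ae_restrict_mem measurableSet_Ioc] with r hr
      have hr0 : 0 < r := hr.1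
      have htc : Tendsto (fun t : ℝ => t ^ c) (nhdsWithin 0 (Set.Ioi 0)) (nhds 0) := by
        have h0 := (Real.continuousAt_rpow_const 0 c (Or.inr hc.le)).tendsto
        rw [Real.zero_rpow hc.ne'] at h0
        exact h0.mono_left nhdsWithin_le_nhds
      have h1 : Tendsto (fun t : ℝ => t ^ c * (ω r * r ^ (-1 - c)))
          (nhdsWithin 0 (Set.Ioi 0)) (nhds 0) := by
        simpa using htc.mul_const (ω r * r ^ (-1 - c))
      apply h1.congr'
      filter_upwards [eventually_nhdsWithin_of_eventually_nhds
        (eventually_lt_nhds hr0)] with t htr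
      rw [hF]
      simp only [Set.indicator_of_mem (Set.mem_Ioc.2 ⟨htr, hr.2⟩)]
    have hDC := tendsto_integral_filter_of_dominated_convergence (fun r => ω r / r)
      hmeas hbound hfint hlim
    simp only [integral_zero] at hDC
    apply hDC.congr'
    filter_upwards [hev] with t ht
    have hsub : Set.Ioc (0:ℝ) 1 ∩ Set.Ioc t 1 = Set.Ioc t 1 :=
      Set.inter_eq_self_of_subset_right (Set.Ioc_subset_Ioc_left ht.1.le)
    rw [hF]
    rw [setIntegral_indicator measurableSet_Ioc, hsub, integral_const_mul _ _]
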